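/- For natural numbers n ≥ k ≥ 1, let H_{n,k} be the set of tuples (k_1,...,k_n) ∈ ℕ₀^n with ∑_{ℓ=1}^n k_ℓ = k and ∑_{ℓ=1}^n ℓ·k_ℓ = n. Then ∑_{(k_1,...,k_n) ∈ H_{n,k}} ∏_{ℓ=1}^n (ℓ!)^{k_ℓ} ≤ n!. -/

import Mathlib

open Finset

-- a! * b! ≤ (a+b-1)!
lemma aux_fact_mul_fact (a b : ℕ) (ha : 1 ≤ a) (hb : 1 ≤ b) :
    a.factorial * b.factorial ≤ (a + b - 1).factorial := by
  induction a with
  | zero => omega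
  | succ a ih =>
    rcases Nat.eq_zero_or_pos a with rfl | ha'
    · have h1 : 0 + 1 + b - 1 = b := by omega
      simp [h1, Nat.factorial]
    · have h2 := ih ha'
      calc (a+1).factorial * b.factorial = (a+1) * (a.factorial * b.factorial) := by
            rw [Nat.factorial_succ]; ring
        _ ≤ (a+1) * (a + b - 1).factorial := Nat.mul_le_mul_left _ h2
        _ ≤ (a + b) * (a + b - 1).factorial := Nat.mul_le_mul_right _ (by omega)
        _ = (a + b).factorial := by
            have h3 : a + b = (a + b - 1) + 1 := by omega
            rw [h3, Nat.factorial_succ]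
            congr 1 <;> omega
        _ = (a + 1 + b - 1).factorial := by congr 1; omega

-- (c!)^m ≤ (c*m + 1 - m)!
lemma aux_fact_pow (c m : ℕ) (hc : 1 ≤ c) :
    (c.factorial) ^ m ≤ (c * m + 1 - m).factorial := by
  induction m with
  | zero => simp
  | succ m ih =>
    have hm : m ≤ c * m := Nat.le_mul_of_pos_left m hc
    have h1 : 1 ≤ c * m + 1 - m := by omega
    calc (c.factorial) ^ (m+1) = c.factorial * (c.factorial) ^ m := by ring
      _ ≤ c.factorial * (c * m + 1 - m).factorial := Nat.mul_le_mul_left _ ih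
      _ ≤ (c + (c * m + 1 - m) - 1).factorial := aux_fact_mul_fact _ _ hc h1
      _ = (c * (m+1) + 1 - (m+1)).factorial := by
          congr 1
          have : c * (m+1) = c * m + c := by ring
          omega

lemma aux_prod_bound {n : ℕ} (f : Fin n → ℕ) (s : Finset (Fin n)) :
    ∏ ℓ ∈ s, ((ℓ.val + 1).factorial) ^ (f ℓ) ≤
      (∑ ℓ ∈ s, (ℓ.val + 1) * f ℓ + 1 - ∑ ℓ ∈ s, f ℓ).factorial := by
  induction s using Finset.induction with
  | empty => simp
  | @insert a s ha ih =>
    rw [Finset.prod_insert ha, Finset.sum_insert ha, Finset.sum_insert ha]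
    have hfa : f a ≤ (a.val + 1) * f a := Nat.le_mul_of_pos_left _ (by omega)
    have hfs : ∑ ℓ ∈ s, f ℓ ≤ ∑ ℓ ∈ s, (ℓ.val + 1) * f ℓ :=
      Finset.sum_le_sum fun i _ => Nat.le_mul_of_pos_left _ (by omega)
    calc ((a.val + 1).factorial) ^ (f a) * ∏ ℓ ∈ s, ((ℓ.val + 1).factorial) ^ (f ℓ)
        ≤ ((a.val + 1) * f a + 1 - f a).factorial *
          (∑ ℓ ∈ s, (ℓ.val + 1) * f ℓ + 1 - ∑ ℓ ∈ s, f ℓ).factorial :=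
          Nat.mul_le_mul (aux_fact_pow _ _ (by omega)) ih
      _ ≤ (((a.val + 1) * f a + 1 - f a) +
            (∑ ℓ ∈ s, (ℓ.val + 1) * f ℓ + 1 - ∑ ℓ ∈ s, f ℓ) - 1).factorial :=
          aux_fact_mul_fact _ _ (by omega) (by omega)
      _ = ((a.val + 1) * f a + ∑ ℓ ∈ s, (ℓ.val + 1) * f ℓ + 1 -
            (f a + ∑ ℓ ∈ s, f ℓ)).factorial := by congr 1; omega

lemma aux_pow_mul_fact (n : ℕ) : ∀ k, 1 ≤ k → k ≤ n →
    (n - k + 1) ^ (k - 1) * (n - k + 1).factorial ≤ n.factorial := by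
  intro k
  induction k with
  | zero => intro h _; exact absurd h (by omega)
  | succ k ih =>
    intro _ hkn
    rcases Nat.eq_zero_or_pos k with rfl | hk'
    · have h1 : n - 1 + 1 = n := by omega
      simp [h1]
    · have hkn' : k ≤ n := by omega
      have ihh := ih hk' hkn'
      have e1 : n - (k + 1) + 1 = n - k := by omega
      rw [e1]
      simp only [Nat.add_sub_cancel]
      obtain ⟨k', rfl⟩ : ∃ k', k = k' + 1 := ⟨k - 1, by omega⟩
      calc (n - (k'+1)) ^ (k'+1) * (n - (k'+1)).factorial
          = (n - (k'+1)) ^ k' * ((n - (k'+1)) * (n - (k'+1)).factorial) := by ring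
        _ ≤ (n - (k'+1) + 1) ^ k' * ((n - (k'+1) + 1) * (n - (k'+1)).factorial) :=
            Nat.mul_le_mul (Nat.pow_le_pow_left (by omega) _)
              (Nat.mul_le_mul_right _ (by omega))
        _ = (n - (k'+1) + 1) ^ k' * (n - (k'+1) + 1).factorial := by
            rw [Nat.factorial_succ]
        _ ≤ n.factorial := by simpa using ihh

-- multiset of parts (values are ℓ.val, i.e. part − 1) with multiplicities
def partsM {n : ℕ} (f : Fin n → ℕ) : Multiset ℕ :=
  ∑ ℓ : Fin n, f ℓ • ({ℓ.val} : Multiset ℕ)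

lemma card_partsM {n : ℕ} (f : Fin n → ℕ) :
    Multiset.card (partsM f) = ∑ ℓ : Fin n, f ℓ := by
  unfold partsM
  rw [Multiset.card_sum]
  simp [Multiset.card_nsmul]

lemma sum_partsM {n : ℕ} (f : Fin n → ℕ) :
    (partsM f).sum = ∑ ℓ : Fin n, ℓ.val * f ℓ := by
  unfold partsM
  induction (Finset.univ : Finset (Fin n)) using Finset.cons_induction with
  | empty => simp
  | cons a s ha ih =>
    rw [Finset.sum_cons, Finset.sum_cons, Multiset.sum_add, ih]
    congr 1
    rw [Multiset.sum_nsmul]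
    simp [mul_comm]

lemma count_partsM {n : ℕ} (f : Fin n → ℕ) (ℓ : Fin n) :
    (partsM f).count ℓ.val = f ℓ := by
  unfold partsM
  rw [Multiset.count_sum']
  rw [Finset.sum_eq_single ℓ]
  · simp [Multiset.count_nsmul]
  · intro b _ hb
    have : ℓ.val ≠ b.val := fun h => hb (Fin.ext h.symm)
    simp [Multiset.count_nsmul, Multiset.count_singleton, this]
  · simp

lemma list_sum_getD (l : List ℕ) :
    l.sum = ∑ i ∈ Finset.range l.length, l.getD i 0 := by
  induction l with
  | nil => simp
  | cons a t ih =>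
    rw [List.sum_cons, List.length_cons, Finset.sum_range_succ', ih]
    simp [List.getD]
    ring

theorem stmt_5 (n k : ℕ) (hk : 1 ≤ k) (hkn : k ≤ n) :
    ∑ f ∈ (Finset.Nat.antidiagonalTuple n k).filter
        (fun f : Fin n → ℕ => ∑ ℓ : Fin n, (ℓ.val + 1) * f ℓ = n),
      ∏ ℓ : Fin n, ((ℓ.val + 1).factorial) ^ (f ℓ) ≤ n.factorial := by
  classical
  set S := (Finset.Nat.antidiagonalTuple n k).filter
      (fun f : Fin n → ℕ => ∑ ℓ : Fin n, (ℓ.val + 1) * f ℓ = n) with hS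
  have hmem : ∀ f ∈ S, (∑ ℓ : Fin n, f ℓ = k) ∧ (∑ ℓ : Fin n, (ℓ.val+1) * f ℓ = n) := by
    intro f hf
    rw [hS, Finset.mem_filter, Finset.Nat.mem_antidiagonalTuple] at hf
    exact hf
  have hterm : ∀ f ∈ S, ∏ ℓ : Fin n, ((ℓ.val + 1).factorial) ^ (f ℓ) ≤ (n - k + 1).factorial := by
    intro f hf
    obtain ⟨h1, h2⟩ := hmem f hf
    have hb := aux_prod_bound f Finset.univ
    rw [h1, h2] at hb
    have e : n + 1 - k = n - k + 1 := by omega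
    rwa [e] at hb
  have hMcard : ∀ f ∈ S, Multiset.card (partsM f) = k := fun f hf => by
    rw [card_partsM, (hmem f hf).1]
  have hMsum : ∀ f ∈ S, (partsM f).sum = n - k := by
    intro f hf
    obtain ⟨h1, h2⟩ := hmem f hf
    rw [sum_partsM]
    have h3 : ∑ ℓ : Fin n, (ℓ.val + 1) * f ℓ = ∑ ℓ : Fin n, ℓ.val * f ℓ + ∑ ℓ : Fin n, f ℓ := by
      rw [← Finset.sum_add_distrib]; congr 1; ext ℓ; ring
    omega
  set L : (Fin n → ℕ) → List ℕ := fun f => Multiset.sort (partsM f) (· ≤ ·) with hL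
  have hLlen : ∀ f ∈ S, (L f).length = k := fun f hf => by
    rw [hL]; simp only; rw [Multiset.length_sort]; exact hMcard f hf
  have hLsum : ∀ f ∈ S, (L f).sum = n - k := by
    intro f hf
    have h1 : ((L f : Multiset ℕ)).sum = (partsM f).sum := by
      rw [hL]; simp only; rw [Multiset.sort_eq]
    rw [Multiset.sum_coe] at h1
    rw [h1]; exact hMsum f hf
  have hLbound : ∀ f ∈ S, ∀ i, i < k → (L f).getD i 0 ≤ n - k := by
    intro f hf i hi
    have hlen := hLlen f hf
    have hi' : i < (L f).length := by omega
    rw [List.getD_eq_getElem _ _ hi']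
    have hmem' : (L f)[i] ∈ partsM f := by
      rw [← Multiset.mem_sort (· ≤ ·)]
      exact List.getElem_mem _
    have h2 := Multiset.single_le_sum (fun x _ => Nat.zero_le x) _ hmem'
    rw [hMsum f hf] at h2
    exact h2
  have hcard : S.card ≤ (n - k + 1) ^ (k - 1) := by
    have hc : S.card ≤ (Finset.univ : Finset (Fin (k-1) → Fin (n - k + 1))).card := by
      apply Finset.card_le_card_of_injOn
        (fun f i => (⟨min ((L f).getD i.val 0) (n - k), by omega⟩ : Fin (n - k + 1)))
      · intro f hf; exact Finset.mem_univ _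
      · intro f hf g hg hfg
        simp only [Finset.mem_coe] at hf hg
        have hagree : ∀ i, i < k - 1 → (L f).getD i 0 = (L g).getD i 0 := by
          intro i hi
          have h0 := congrFun hfg ⟨i, hi⟩
          have h1 := hLbound f hf i (by omega)
          have h2 := hLbound g hg i (by omega)
          have h3 : min ((L f).getD i 0) (n - k) = min ((L g).getD i 0) (n - k) :=
            congrArg Fin.val h0
          rw [Nat.min_eq_left h1, Nat.min_eq_left h2] at h3
          exact h3
        have hlist : L f = L g := by
          have hlf := hLlen f hf; have hlg := hLlen g hg
          have hsf := hLsum f hf; have hsg := hLsum g hg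
          rw [list_sum_getD, hlf] at hsf
          rw [list_sum_getD, hlg] at hsg
          obtain ⟨k', hk'⟩ : ∃ k', k = k' + 1 := ⟨k - 1, by omega⟩
          subst hk'
          rw [Finset.sum_range_succ] at hsf hsg
          have hpre : ∑ i ∈ Finset.range k', (L f).getD i 0
              = ∑ i ∈ Finset.range k', (L g).getD i 0 :=
            Finset.sum_congr rfl fun i hi =>
              hagree i (by simpa using Finset.mem_range.1 hi)
          have hlast : (L f).getD k' 0 = (L g).getD k' 0 := by omega
          apply List.ext_getElem (by rw [hlf, hlg])
          intro i h1 h2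
          rw [← List.getD_eq_getElem _ 0 h1, ← List.getD_eq_getElem _ 0 h2]
          rcases Nat.lt_or_ge i k' with h | h
          · exact hagree i (by omega)
          · have hik : i = k' := by rw [hlf] at h1; omega
            rw [hik]; exact hlast
        have hM : partsM f = partsM g := by
          rw [← Multiset.sort_eq (partsM f) (· ≤ ·), ← Multiset.sort_eq (partsM g) (· ≤ ·)]
          exact congrArg _ hlist
        funext ℓ
        rw [← count_partsM f ℓ, ← count_partsM g ℓ, hM]
    simpa [Fintype.card_fun] using hc
  calc ∑ f ∈ S, ∏ ℓ : Fin n, ((ℓ.val + 1).factorial) ^ (f ℓ)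
      ≤ S.card • (n - k + 1).factorial := Finset.sum_le_card_nsmul _ _ _ hterm
    _ = S.card * (n - k + 1).factorial := smul_eq_mul _ _
    _ ≤ (n - k + 1) ^ (k - 1) * (n - k + 1).factorial := Nat.mul_le_mul_right _ hcard
    _ ≤ n.factorial := aux_pow_mul_fact n k hk hkn
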